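/- If C ⊆ S(n,2) is a W-light code, i.e., some orientation of the Johnson graph J(n,2) gives every vertex of C outdegree at most W, then |C| ≤ ⌊(W+1)n/2⌋. -/

import Mathlib

def weight {n : ℕ} (B : Fin n → Bool) : ℕ :=
  (Finset.univ.filter (fun i => B i = true)).card

def hamming {n : ℕ} (B B' : Fin n → Bool) : ℕ :=
  (Finset.univ.filter (fun i => B i ≠ B' i)).card

theorem hamming_comm {n : ℕ} (B B' : Fin n → Bool) : hamming B B' = hamming B' B := by
  unfold hamming; congr 1; ext i; simp [ne_comm]

def johnson (n w : ℕ) : SimpleGraph {B : Fin n → Bool // weight B = w} where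
  Adj B B' := hamming B.1 B'.1 = 2
  symm := ⟨fun B B' (h : hamming B.1 B'.1 = 2) => show hamming B'.1 B.1 = 2 by rwa [hamming_comm]⟩
  loopless := ⟨fun B (h : hamming B.1 B.1 = 2) => by simp [hamming] at h⟩

structure GraphOrientation {V : Type*} (G : SimpleGraph V) where
  dir : V → V → Prop
  dir_adj : ∀ u v, dir u v → G.Adj u v
  total : ∀ u v, G.Adj u v → dir u v ∨ dir v u
  asymm : ∀ u v, dir u v → ¬ dir v u

noncomputable def outdeg {V : Type*} {G : SimpleGraph V} (Λ : GraphOrientation G) (v : V) : ℕ :=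
  {u | Λ.dir v u}.ncard

noncomputable def Lmax (W n w : ℕ) : ℕ :=
  sSup {k | ∃ Λ : GraphOrientation (johnson n w), k = {B | outdeg Λ B ≤ W}.ncard}

open Finset

lemma nat_aux1 (k : ℕ) : k * (k - 1) = k * k - k := by
  cases k with
  | zero => rfl
  | succ t => simp [Nat.succ_sub_one]; ring_nf; omega

lemma nat_aux2 (k : ℕ) : k ^ 2 = k * (k - 1) + k := by
  cases k with
  | zero => rfl
  | succ t => simp [Nat.succ_sub_one]; ring

-- support determines the word
lemma eq_of_support_eq {n : ℕ} {B B' : Fin n → Bool}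
    (h : univ.filter (fun i => B i = true) = univ.filter (fun i => B' i = true)) : B = B' := by
  funext k
  have h1 : k ∈ univ.filter (fun i => B i = true) ↔ k ∈ univ.filter (fun i => B' i = true) := by
    rw [h]
  simp only [mem_filter, mem_univ, true_and] at h1
  cases hB : B k <;> cases hB' : B' k <;> simp_all

lemma weight2_support {n : ℕ} {B : Fin n → Bool} (hB : weight B = 2)
    {i j : Fin n} (hij : i ≠ j) (h1 : B i = true) (h2 : B j = true) :
    univ.filter (fun k => B k = true) = {i, j} := by
  symm
  apply eq_of_subset_of_card_le
  · intro k hk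
    simp only [mem_insert, mem_singleton] at hk
    rcases hk with rfl | rfl <;> simp [h1, h2]
  · have h2' : #(univ.filter (fun k => B k = true)) = 2 := hB
    rw [h2', card_insert_of_notMem (by simpa using hij), card_singleton]

lemma weight2_eq {n : ℕ} {B B' : Fin n → Bool} (hB : weight B = 2) (hB' : weight B' = 2)
    {i j : Fin n} (hij : i ≠ j) (h1 : B i = true) (h2 : B j = true)
    (h1' : B' i = true) (h2' : B' j = true) : B = B' := by
  apply eq_of_support_eq
  rw [weight2_support hB hij h1 h2, weight2_support hB' hij h1' h2']

lemma weight2_adj {n : ℕ} {B B' : Fin n → Bool} (hB : weight B = 2) (hB' : weight B' = 2)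
    (hne : B ≠ B') {i : Fin n} (h1 : B i = true) (h1' : B' i = true) :
    hamming B B' = 2 := by
  classical
  set A := univ.filter (fun k => B k = true) with hA
  set A' := univ.filter (fun k => B' k = true) with hA'
  have hinter : A ∩ A' = {i} := by
    apply Finset.eq_singleton_iff_unique_mem.mpr
    constructor
    · simp [hA, hA', h1, h1']
    · intro j hj
      simp only [hA, hA', mem_inter, mem_filter, mem_univ, true_and] at hj
      by_contra hji
      exact hne (weight2_eq hB hB' (Ne.symm hji) h1 hj.1 h1' hj.2)
  have hfilt : univ.filter (fun k => B k ≠ B' k) = (A \ A') ∪ (A' \ A) := by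
    ext k
    simp only [hA, hA', mem_union, mem_sdiff, mem_filter, mem_univ, true_and]
    cases hk : B k <;> cases hk' : B' k <;> simp
  have c1 : (A \ A').card = 1 := by
    have := Finset.card_sdiff_add_card_inter A A'
    rw [hinter] at this
    simp only [card_singleton] at this
    have hAc : A.card = 2 := hB
    omega
  have c2 : (A' \ A).card = 1 := by
    have := Finset.card_sdiff_add_card_inter A' A
    rw [inter_comm, hinter] at this
    simp only [card_singleton] at this
    have hAc : A'.card = 2 := hB'
    omega
  rw [hamming, hfilt, card_union_of_disjoint (disjoint_sdiff_sdiff), c1, c2]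

theorem stmt9 (W n : ℕ) (C : Set {B : Fin n → Bool // weight B = 2})
    (h : ∃ Λ : GraphOrientation (johnson n 2), ∀ B ∈ C, outdeg Λ B ≤ W) :
    C.ncard ≤ (W + 1) * n / 2 := by
  classical
  obtain ⟨Λ, hΛ⟩ := h
  have hCfin : C.Finite := Set.toFinite C
  set F := hCfin.toFinset with hF
  have hmemF : ∀ B, B ∈ F ↔ B ∈ C := fun B => hCfin.mem_toFinset
  have hcard : C.ncard = F.card := (Set.ncard_eq_toFinset_card C hCfin)
  set m := F.card with hm
  set ψ : Fin n → ℕ := fun i => (F.filter (fun B => B.1 i = true)).card with hψ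
  -- claim 1: sum of ψ = 2m
  have claim1 : ∑ i, ψ i = 2 * m := by
    have : ∑ i, ψ i = ∑ B ∈ F, ∑ i, (if B.1 i = true then 1 else 0) := by
      rw [Finset.sum_comm]
      refine Finset.sum_congr rfl fun i _ => ?_
      exact Finset.card_filter _ _
    rw [this]
    have : ∀ B ∈ F, (∑ i, (if B.1 i = true then 1 else 0)) = 2 := by
      intro B _
      rw [← Finset.card_filter]
      exact B.2
    rw [Finset.sum_congr rfl this, Finset.sum_const, smul_eq_mul, mul_comm]
  -- directed pairs
  set P := (F ×ˢ F).filter (fun p => Λ.dir p.1 p.2) with hP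
  have hPcard : P.card ≤ W * m := by
    rw [hP]
    have := Finset.card_eq_sum_card_fiberwise
      (f := fun p : {B : Fin n → Bool // weight B = 2} × {B : Fin n → Bool // weight B = 2} => p.1)
      (s := (F ×ˢ F).filter (fun p => Λ.dir p.1 p.2)) (t := F)
      (by intro p hp; simp only [Finset.mem_coe, mem_filter, mem_product] at hp; exact hp.1.1)
    rw [this]
    calc ∑ B ∈ F, (((F ×ˢ F).filter (fun p => Λ.dir p.1 p.2)).filter (fun p => p.1 = B)).card
        ≤ ∑ B ∈ F, W := by
          refine Finset.sum_le_sum fun B hB => ?_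
          have hW : outdeg Λ B ≤ W := hΛ B ((hmemF B).1 hB)
          refine le_trans ?_ hW
          rw [outdeg, Set.ncard_eq_toFinset_card']
          apply Finset.card_le_card_of_injOn (fun p => p.2)
          · intro p hp
            simp only [Finset.mem_coe, mem_filter, mem_product] at hp
            simp only [Finset.mem_coe, Set.mem_toFinset, Set.mem_setOf_eq]
            rw [← hp.2]; exact hp.1.2
          · intro p hp q hq hpq
            simp only [Finset.mem_coe, mem_filter, mem_product] at hp hq
            exact Prod.ext (hp.2.trans hq.2.symm) hpq
      _ = W * m := by rw [Finset.sum_const, smul_eq_mul, mul_comm]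
  -- claim 2: sum ψ(ψ-1) ≤ 2 W m
  have claim2 : ∑ i, ψ i * (ψ i - 1) ≤ 2 * (W * m) := by
    have hdisj : (↑(univ : Finset (Fin n)) : Set (Fin n)).PairwiseDisjoint
        (fun i => (F.filter (fun B => B.1 i = true)).offDiag) := by
      intro i _ j _ hij
      simp only [Function.onFun, Finset.disjoint_left]
      intro p hpi hpj
      simp only [Finset.mem_offDiag, mem_filter] at hpi hpj
      exact hpi.2.2 (Subtype.ext (weight2_eq p.1.2 p.2.2 hij hpi.1.2 hpj.1.2 hpi.2.1.2 hpj.2.1.2))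
    have hcount : ∀ i, ψ i * (ψ i - 1) = ((F.filter (fun B => B.1 i = true)).offDiag).card := by
      intro i
      rw [Finset.offDiag_card]
      show ψ i * (ψ i - 1) = ψ i * ψ i - ψ i
      exact nat_aux1 _
    calc ∑ i, ψ i * (ψ i - 1)
        = (univ.biUnion (fun i => (F.filter (fun B => B.1 i = true)).offDiag)).card := by
          rw [Finset.card_biUnion (fun i hi j hj hij => hdisj (by simp) (by simp) hij)]
          exact Finset.sum_congr rfl fun i _ => hcount i
      _ ≤ (P ∪ P.image Prod.swap).card := by
          apply Finset.card_le_card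
          intro p hp
          simp only [Finset.mem_biUnion] at hp
          obtain ⟨i, _, hp⟩ := hp
          simp only [Finset.mem_offDiag, mem_filter] at hp
          obtain ⟨⟨hp1F, hp1i⟩, ⟨hp2F, hp2i⟩, hne⟩ := hp
          have hadj : (johnson n 2).Adj p.1 p.2 :=
            weight2_adj p.1.2 p.2.2 (fun he => hne (Subtype.ext he)) hp1i hp2i
          rcases Λ.total _ _ hadj with hd | hd
          · apply Finset.mem_union_left
            rw [hP]; simp only [mem_filter, mem_product]
            exact ⟨⟨hp1F, hp2F⟩, hd⟩
          · apply Finset.mem_union_right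
            rw [Finset.mem_image]
            refine ⟨(p.2, p.1), ?_, rfl⟩
            rw [hP]; simp only [mem_filter, mem_product]
            exact ⟨⟨hp2F, hp1F⟩, hd⟩
      _ ≤ P.card + (P.image Prod.swap).card := Finset.card_union_le _ _
      _ ≤ P.card + P.card := by
          have := Finset.card_image_le (s := P) (f := Prod.swap)
          omega
      _ ≤ 2 * (W * m) := by omega
  -- sum of squares bound
  have hsq : ∑ i, ψ i ^ 2 ≤ 2 * (W * m) + 2 * m := by
    have : ∀ i, ψ i ^ 2 = ψ i * (ψ i - 1) + ψ i := fun i => nat_aux2 _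
    calc ∑ i, ψ i ^ 2 = ∑ i, (ψ i * (ψ i - 1) + ψ i) := Finset.sum_congr rfl fun i _ => this i
      _ = (∑ i, ψ i * (ψ i - 1)) + ∑ i, ψ i := Finset.sum_add_distrib
      _ ≤ 2 * (W * m) + 2 * m := by rw [claim1]; omega
  -- Cauchy-Schwarz
  have hCS : (2 * m) ^ 2 ≤ n * (2 * (W * m) + 2 * m) := by
    calc (2 * m) ^ 2 = (∑ i, ψ i) ^ 2 := by rw [claim1]
      _ ≤ (univ : Finset (Fin n)).card * ∑ i, ψ i ^ 2 := sq_sum_le_card_mul_sum_sq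
      _ ≤ n * (2 * (W * m) + 2 * m) := by
          rw [Finset.card_univ, Fintype.card_fin]
          exact Nat.mul_le_mul_left n hsq
  -- conclude
  rw [hcard]
  rcases Nat.eq_zero_or_pos m with hm0 | hm0
  · rw [hm0]; exact Nat.zero_le _
  have key : 2 * m ≤ (W + 1) * n := by
    have h4 : (2 * m) * (2 * m) ≤ ((W + 1) * n) * (2 * m) := by
      calc (2 * m) * (2 * m) = (2 * m)^2 := (sq _).symm
        _ ≤ n * (2 * (W * m) + 2 * m) := hCS
        _ = ((W + 1) * n) * (2 * m) := by ring
    exact Nat.le_of_mul_le_mul_right h4 (by omega)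
  rw [Nat.le_div_iff_mul_le (by omega)]
  omega
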